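/- If S₁,…,Sₙ are points in ℝ² such that they are not all collinear, then there exists c₀ > 0 such that for all 0 < c < c₀ the family {H_{Sᵢ,c}(Pᵢ)} admits no line transversal, where Pᵢ are compact convex sets with Sᵢ ∈ interior(Pᵢ). -/

import Mathlib

def homothetyImage (S : EuclideanSpace ℝ (Fin 2)) (c : ℝ)
    (P : Set (EuclideanSpace ℝ (Fin 2))) : Set (EuclideanSpace ℝ (Fin 2)) :=
  (fun X => S + c • (X - S)) '' P

def IsLine (L : Set (EuclideanSpace ℝ (Fin 2))) : Prop :=
  ∃ (f : EuclideanSpace ℝ (Fin 2) →L[ℝ] ℝ) (a : ℝ), f ≠ 0 ∧ L = {x | f x = a}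

open Submodule

lemma exists_line : ∃ L, IsLine L := by
  refine ⟨_, EuclideanSpace.proj (0 : Fin 2), 0, ?_, rfl⟩
  intro h
  have : (EuclideanSpace.proj (0 : Fin 2)) (EuclideanSpace.single 0 (1:ℝ)) = 1 := by simp
  rw [h] at this; simp at this

lemma exists_indep {m : ℕ} (S : Fin m → EuclideanSpace ℝ (Fin 2))
    (hnc : ¬ ∃ L, IsLine L ∧ ∀ i, S i ∈ L) :
    ∃ i j k : Fin m, LinearIndependent ℝ ![S k - S i, S j - S i] := by
  rcases Nat.eq_zero_or_pos m with hm | hm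
  · exfalso; subst hm
    obtain ⟨L, hL⟩ := exists_line
    exact hnc ⟨L, hL, fun i => i.elim0⟩
  set i₀ : Fin m := ⟨0, hm⟩
  set W : Submodule ℝ (EuclideanSpace ℝ (Fin 2)) :=
    span ℝ (Set.range (fun j => S j - S i₀)) with hWdef
  have hW : W = ⊤ := by
    by_contra hW
    have hbot : Wᗮ ≠ ⊥ := by
      intro h; exact hW (Submodule.orthogonal_eq_bot_iff.mp h)
    obtain ⟨n, hnW, hn0⟩ := Wᗮ.ne_bot_iff.mp hbot
    refine hnc ⟨{x | innerSL ℝ n x = innerSL ℝ n (S i₀)}, ⟨innerSL ℝ n, _, ?_, rfl⟩, ?_⟩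
    · intro h
      have : innerSL ℝ n n = 0 := by rw [h]; rfl
      exact hn0 (by simpa using (inner_self_eq_zero (𝕜 := ℝ)).mp this)
    · intro i
      have hmem : S i - S i₀ ∈ W := subset_span ⟨i, rfl⟩
      have := hnW _ hmem
      simp only [Set.mem_setOf_eq]
      have : (innerSL ℝ n) (S i - S i₀) = 0 := by simpa [real_inner_comm] using this
      have h2 : (innerSL ℝ n) (S i) - (innerSL ℝ n) (S i₀) = 0 := by
        rw [← map_sub]; exact this
      linarith
  -- get u nonzero
  have h2 : Module.finrank ℝ (EuclideanSpace ℝ (Fin 2)) = 2 := finrank_euclideanSpace_fin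
  have hu : ∃ j, S j - S i₀ ≠ 0 := by
    by_contra h
    push_neg at h
    have : W ≤ ⊥ := by
      rw [hWdef, span_le]
      rintro x ⟨j, rfl⟩
      simp [h j]
    rw [hW] at this
    have : (⊥ : Submodule ℝ (EuclideanSpace ℝ (Fin 2))) = ⊤ := le_antisymm le_top this
    exact absurd this bot_ne_top
  obtain ⟨j, hj⟩ := hu
  have hv : ∃ k, S k - S i₀ ∉ span ℝ {S j - S i₀} := by
    by_contra h
    push_neg at h
    have hle : W ≤ span ℝ {S j - S i₀} := by
      rw [hWdef, span_le]
      rintro x ⟨k, rfl⟩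
      exact h k
    rw [hW] at hle
    have h1 : Module.finrank ℝ (span ℝ {S j - S i₀}) = 1 := finrank_span_singleton hj
    have : span ℝ {S j - S i₀} = ⊤ := le_antisymm le_top hle
    rw [this, finrank_top] at h1
    omega
  obtain ⟨k, hk⟩ := hv
  refine ⟨i₀, j, k, ?_⟩
  rw [linearIndependent_fin2]
  constructor
  · simpa using hj
  · intro a ha
    exact hk (mem_span_singleton.mpr ⟨a, by simpa using ha⟩)

theorem no_transversal_for_small_ratio_of_noncollinear {m : ℕ}
    (P : Fin m → Set (EuclideanSpace ℝ (Fin 2)))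
    (S : Fin m → EuclideanSpace ℝ (Fin 2))
    (hcpt : ∀ i, IsCompact (P i)) (hconv : ∀ i, Convex ℝ (P i))
    (hS : ∀ i, S i ∈ interior (P i))
    -- the centers are not all collinear:
    (hnc : ¬ ∃ L, IsLine L ∧ ∀ i, S i ∈ L) :
    ∃ c₀ : ℝ, 0 < c₀ ∧ ∀ c : ℝ, 0 < c → c < c₀ →
      ¬ ∃ t, IsLine t ∧ ∀ i, (t ∩ homothetyImage (S i) c (P i)).Nonempty := by
  classical
  obtain ⟨i₀, j, k, hind⟩ := exists_indep S hnc
  set u := S j - S i₀ with hu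
  set v := S k - S i₀ with hv
  -- span of the pair is everything
  have hspan : span ℝ (Set.range ![v, u]) = ⊤ := by
    apply hind.span_eq_top_of_card_eq_finrank
    simp [finrank_euclideanSpace_fin]
  -- the evaluation map on the dual
  let φ : (EuclideanSpace ℝ (Fin 2) →L[ℝ] ℝ) →ₗ[ℝ] ℝ × ℝ :=
    { toFun := fun f => (f v, f u)
      map_add' := by intros; simp
      map_smul' := by intros; simp }
  have hker : LinearMap.ker φ = ⊥ := by
    rw [LinearMap.ker_eq_bot']
    intro f hf
    have h1 : f v = 0 := congrArg Prod.fst hf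
    have h2 : f u = 0 := congrArg Prod.snd hf
    apply ContinuousLinearMap.coe_injective
    refine LinearMap.ext_on hspan ?_
    rintro x ⟨i, rfl⟩
    fin_cases i <;> simp [h1, h2]
  obtain ⟨K, hK0, hK⟩ := φ.exists_antilipschitzWith hker
  -- bound the sets
  have hR : ∀ i, ∃ r : ℝ, P i ⊆ Metric.closedBall (S i) r := fun i =>
    (Metric.isBounded_iff_subset_closedBall (S i)).mp (hcpt i).isBounded
  choose r hr using hR
  set R : ℝ := 1 + ∑ i, |r i| with hRdef
  have hRpos : 0 < R := by
    have : (0:ℝ) ≤ ∑ i, |r i| := Finset.sum_nonneg fun i _ => abs_nonneg _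
    linarith
  have hrR : ∀ i, r i ≤ R := by
    intro i
    have h1 : |r i| ≤ ∑ i, |r i| :=
      Finset.single_le_sum (f := fun i => |r i|) (fun i _ => abs_nonneg _) (Finset.mem_univ i)
    have := le_abs_self (r i)
    linarith
  have hKpos : (0:ℝ) < K := hK0
  refine ⟨1 / (2 * K * R), by positivity, ?_⟩
  rintro c hc hcc ⟨t, ⟨f, a, hf0, rfl⟩, ht⟩
  -- each center is close to the line in the f-sense
  have key : ∀ i, |f (S i) - a| ≤ c * (‖f‖ * R) := by
    intro i
    obtain ⟨y, hyt, x, hx, rfl⟩ := ht i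
    have hfy : f (S i) + c * f (x - S i) = a := by
      simpa [map_add, map_smul, smul_eq_mul] using hyt
    have hxb : ‖x - S i‖ ≤ R := by
      have := hr i hx
      rw [Metric.mem_closedBall, dist_eq_norm] at this
      exact this.trans (hrR i)
    have h2 : f (S i) - a = -(c * f (x - S i)) := by linarith
    rw [h2, abs_neg, abs_mul, abs_of_nonneg hc.le]
    gcongr
    calc |f (x - S i)| = ‖f (x - S i)‖ := (Real.norm_eq_abs _).symm
      _ ≤ ‖f‖ * ‖x - S i‖ := f.le_opNorm _
      _ ≤ ‖f‖ * R := by gcongr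
  -- combine
  have habs : ∀ p q : Fin m, |f (S p) - f (S q)| ≤ 2 * (c * (‖f‖ * R)) := by
    intro p q
    have h1 := key p
    have h2 := key q
    have h3 : f (S p) - f (S q) = (f (S p) - a) - (f (S q) - a) := by ring
    rw [h3]
    calc |(f (S p) - a) - (f (S q) - a)| ≤ |f (S p) - a| + |f (S q) - a| := abs_sub _ _
      _ ≤ 2 * (c * (‖f‖ * R)) := by linarith
  have hfv : |f v| ≤ 2 * (c * (‖f‖ * R)) := by
    have := habs k i₀
    simpa [hv, map_sub] using this
  have hfu : |f u| ≤ 2 * (c * (‖f‖ * R)) := by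
    have := habs j i₀
    simpa [hu, map_sub] using this
  have hφ : ‖φ f‖ ≤ 2 * (c * (‖f‖ * R)) := by
    have : ‖φ f‖ = max ‖f v‖ ‖f u‖ := rfl
    rw [this]
    simp only [Real.norm_eq_abs]
    exact max_le hfv hfu
  have hle : ‖f‖ ≤ K * ‖φ f‖ := by
    have := hK.le_mul_dist f 0
    simpa [dist_eq_norm, map_zero] using this
  have hfpos : 0 < ‖f‖ := norm_pos_iff.mpr hf0
  have hsmall : c * (2 * K * R) < 1 := by
    rw [lt_div_iff₀ (by positivity)] at hcc
    linarith
  have : ‖f‖ ≤ (K:ℝ) * (2 * (c * (‖f‖ * R))) := hle.trans (by gcongr)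
  nlinarith
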